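/- Let F be a flipclass of paths in B(𝔖_n), let E = E(F), and let m = |E|. Then: (1) the set F′ = {r_E(Γ) : Γ ∈ F} is a flipclass of 𝔖_m, and the map r_E : F → F′ is a bijection commuting with all flip operators and satisfying r_E(l_i(Γ)) = l_i(r_E(Γ)) for every Γ ∈ F and every i (where l_i denotes the i-th label of a path); (2) r_E induces isomorphisms of edge-labelled directed graphs S_F ≅ S_{F′} and TS_F ≅ TS_{F′}; (3) for any reflection ordering ⪯ on 𝔖_n, the increasing paths of F with respect to ⪯ correspond under r_E to the increasing paths of F′ with respect to ⪯_{r_E}; (4) r_E induces an isomorphism of flipclasses from F to F′. -/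

import Mathlib

open MvPolynomial

/-- The symmetric group `𝔖ₙ`, realized as permutations of `Fin n`. -/
abbrev Pm (n : ℕ) := Equiv.Perm (Fin n)

/-- The Coxeter length of a permutation: its number of inversions. -/
def len {n : ℕ} (w : Pm n) : ℕ :=
  (Finset.univ.filter fun q : Fin n × Fin n => q.1 < q.2 ∧ w q.2 < w q.1).card

/-- Edges of the Bruhat graph `B(𝔖ₙ)`: `a → b` iff `b * a⁻¹` is a transposition and
`ℓ(a) < ℓ(b)`.  The label of the edge is `b * a⁻¹`. -/
def BEdge {n : ℕ} (a b : Pm n) : Prop :=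
  (b * a⁻¹).IsSwap ∧ len a < len b

/-- Bruhat order: `u ≤ v` iff there is a directed path from `u` to `v` in the Bruhat graph. -/
def bruhatLE {n : ℕ} : Pm n → Pm n → Prop := Relation.ReflTransGen BEdge

/-- Strict Bruhat order. -/
def bruhatLT {n : ℕ} (a b : Pm n) : Prop := bruhatLE a b ∧ a ≠ b

/-- Covering relation of Bruhat order. -/
def bruhatCov {n : ℕ} (a b : Pm n) : Prop :=
  bruhatLT a b ∧ ∀ z, bruhatLT a z → bruhatLT z b → False

/-- A path of length `h` from `u` to `v` in the Bruhat graph, encoded as a function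
`ℕ → 𝔖ₙ` normalized to be constantly `v` from time `h` on. -/
def IsPath (n h : ℕ) (u v : Pm n) (p : ℕ → Pm n) : Prop :=
  p 0 = u ∧ (∀ j, h ≤ j → p j = v) ∧ ∀ i, i < h → BEdge (p i) (p (i + 1))

/-- The `i`-th label (`0 ≤ i ≤ h-1`) of a path. -/
def lab {n : ℕ} (p : ℕ → Pm n) (i : ℕ) : Pm n := p (i + 1) * (p i)⁻¹

/-- `q` is obtained from `p` by the `i`-th flip (`1 ≤ i ≤ h-1`): they differ exactly at
position `i`. -/
def FlipAt {n : ℕ} (h i : ℕ) (p q : ℕ → Pm n) : Prop :=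
  0 < i ∧ i < h ∧ p i ≠ q i ∧ ∀ j, j ≠ i → p j = q j

/-- One application of a flip operator on paths of length `h` from `u` to `v`. -/
def FlipStep (n h : ℕ) (u v : Pm n) (p q : ℕ → Pm n) : Prop :=
  IsPath n h u v p ∧ IsPath n h u v q ∧ ∃ i, FlipAt h i p q

/-- `F` is an `h`-flipclass of paths from `u` to `v`: an orbit of the group generated by
the flip operators, i.e. a connected component under single flips. -/
def IsFlipclass (n h : ℕ) (u v : Pm n) (F : Set (ℕ → Pm n)) : Prop :=
  ∃ p, IsPath n h u v p ∧ F = {q | Relation.ReflTransGen (FlipStep n h u v) p q}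

/-- Vertex set of the support graph `S_F`. -/
def SV (n h : ℕ) (F : Set (ℕ → Pm n)) : Set (Pm n) :=
  {a | ∃ p ∈ F, ∃ i, i ≤ h ∧ p i = a}

/-- Edge relation of the support graph `S_F` (labels are determined: `b * a⁻¹`). -/
def SE (n h : ℕ) (F : Set (ℕ → Pm n)) (a b : Pm n) : Prop :=
  ∃ p ∈ F, ∃ i, i < h ∧ p i = a ∧ p (i + 1) = b

/-- Vertex set of the time-support graph `TS_F`. -/
def TSV (n h : ℕ) (F : Set (ℕ → Pm n)) : Set (Pm n × ℕ) :=
  {x | x.2 ≤ h ∧ ∃ p ∈ F, p x.2 = x.1}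

/-- Edge relation of the time-support graph `TS_F`. -/
def TSE (n h : ℕ) (F : Set (ℕ → Pm n)) (x y : Pm n × ℕ) : Prop :=
  x.2 < h ∧ y.2 = x.2 + 1 ∧ ∃ p ∈ F, p x.2 = x.1 ∧ p (x.2 + 1) = y.1

/-- In-degree of a vertex of `TS_F`. -/
noncomputable def indeg (n h : ℕ) (F : Set (ℕ → Pm n)) (x : Pm n × ℕ) : ℕ :=
  Set.ncard {w | TSE n h F w x}

/-- Out-degree of a vertex of `TS_F`. -/
noncomputable def outdeg (n h : ℕ) (F : Set (ℕ → Pm n)) (x : Pm n × ℕ) : ℕ :=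
  Set.ncard {w | TSE n h F x w}

/-- The `t`-vector of `F`: `tᵢ` is the number of vertices of `TS_F` at time `i`. -/
noncomputable def tvec (n h : ℕ) (F : Set (ℕ → Pm n)) (i : ℕ) : ℕ :=
  Set.ncard {a : Pm n | (a, i) ∈ TSV n h F}

lemma TSV_finite (n h : ℕ) (F : Set (ℕ → Pm n)) : (TSV n h F).Finite :=
  Set.Finite.subset (Set.finite_univ.prod (Set.finite_Iic h))
    (fun _ hx => Set.mem_prod.mpr ⟨Set.mem_univ _, hx.1⟩)

/-- The `ι`-polynomial of `F`:
`ι_F(x,y,t) = Σ_{(a,i) ∈ V(TS_F)} x^indeg(a,i) y^outdeg(a,i) t^i`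
(the variables `x, y, t` are `X 0, X 1, X 2`). -/
noncomputable def iota (n h : ℕ) (F : Set (ℕ → Pm n)) : MvPolynomial (Fin 3) ℤ :=
  ∑ x ∈ (TSV_finite n h F).toFinset,
    X 0 ^ indeg n h F x * X 1 ^ outdeg n h F x * X 2 ^ x.2

/-- A reflection ordering on the transpositions of `𝔖ₙ`: a total order `⪯` on the set of
transpositions such that for all `a < b < c`, either
`(a,b) ⪯ (a,c) ⪯ (b,c)` or `(b,c) ⪯ (a,c) ⪯ (a,b)`. -/
structure ReflOrder (n : ℕ) where
  le : Pm n → Pm n → Prop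
  le_refl : ∀ t : Pm n, t.IsSwap → le t t
  le_antisymm : ∀ s t : Pm n, s.IsSwap → t.IsSwap → le s t → le t s → s = t
  le_trans : ∀ r s t : Pm n, r.IsSwap → s.IsSwap → t.IsSwap → le r s → le s t → le r t
  le_total : ∀ s t : Pm n, s.IsSwap → t.IsSwap → le s t ∨ le t s
  reflection_cond : ∀ a b c : Fin n, a < b → b < c →
    (le (Equiv.swap a b) (Equiv.swap a c) ∧ le (Equiv.swap a c) (Equiv.swap b c)) ∨
    (le (Equiv.swap b c) (Equiv.swap a c) ∧ le (Equiv.swap a c) (Equiv.swap a b))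

/-- A path (of length `h`) is increasing w.r.t. an order `le` on transpositions if its
sequence of labels is weakly increasing. -/
def IncreasingRel {n : ℕ} (h : ℕ) (le : Pm n → Pm n → Prop) (p : ℕ → Pm n) : Prop :=
  ∀ i, i + 1 < h → le (lab p i) (lab p (i + 1))

/-- The number of increasing paths (w.r.t. a reflection ordering) in `F`. -/
noncomputable def cnt (n h : ℕ) (F : Set (ℕ → Pm n)) (ord : ReflOrder n) : ℕ :=
  Set.ncard {p ∈ F | IncreasingRel h ord.le p}

/-- Lexicographic comparison of the label sequences of two paths of length `h`. -/
def LabelLexLe {n : ℕ} (h : ℕ) (le : Pm n → Pm n → Prop) (p q : ℕ → Pm n) : Prop :=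
  (∀ i, i < h → lab p i = lab q i) ∨
  ∃ i, i < h ∧ (∀ j, j < i → lab p j = lab q j) ∧ lab p i ≠ lab q i ∧ le (lab p i) (lab q i)

/-- A path of length `h` from `(u,0)` to `(v,h)` in the time-support graph `TS_F`,
encoded by its sequence of permutation components. -/
def IsTSPath (n h : ℕ) (F : Set (ℕ → Pm n)) (u v : Pm n) (y : ℕ → Pm n) : Prop :=
  y 0 = u ∧ (∀ j, h ≤ j → y j = v) ∧ ∀ i, i < h → TSE n h F (y i, i) (y (i + 1), i + 1)

/-- The set of labels of the paths of `F`. -/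
def labelSet (n h : ℕ) (F : Set (ℕ → Pm n)) : Set (Pm n) :=
  {t | ∃ p ∈ F, ∃ i, i < h ∧ lab p i = t}

/-- Lexicographic order on the transpositions of `𝔖ₙ`:
`(a,b) ⪯ (c,d)` (with `a<b`, `c<d`) iff `a < c`, or `a = c` and `b ≤ d`. -/
def lexLe (n : ℕ) (s t : Pm n) : Prop :=
  ∃ a b c d : Fin n, a < b ∧ c < d ∧ s = Equiv.swap a b ∧ t = Equiv.swap c d ∧
    (a < c ∨ (a = c ∧ b ≤ d))

/-- Isomorphism of flipclasses: a pair `(f, g)` where `f` is a flips-preserving bijection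
on the underlying permutations (inducing a bijection of the path sets), and `g` is a
label-matching bijection of the label sets that is order preserving w.r.t. the
lexicographic orders. -/
def FlipclassIso (n m h : ℕ) (F : Set (ℕ → Pm n)) (F' : Set (ℕ → Pm m)) : Prop :=
  ∃ f : Pm n → Pm m, ∃ g : Pm n → Pm m,
    Set.BijOn f (SV n h F) (SV m h F') ∧
    Set.BijOn (fun p => f ∘ p) F F' ∧
    (∀ p ∈ F, ∀ q ∈ F, ∀ i, FlipAt h i p q → FlipAt h i (f ∘ p) (f ∘ q)) ∧
    Set.BijOn g (labelSet n h F) (labelSet m h F') ∧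
    (∀ p ∈ F, ∀ i, i < h → g (lab p i) = lab (f ∘ p) i) ∧
    (∀ s t, s ∈ labelSet n h F → t ∈ labelSet n h F → lexLe n s t → lexLe m (g s) (g t))

/-- `G(Γ)` is connected: any two letters moved by some label of the path `p` are joined
by a chain of labels. -/
def IrredPath (n k : ℕ) (p : ℕ → Pm n) : Prop :=
  ∀ a b : Fin n, (∃ i, i < k ∧ lab p i a ≠ a) → (∃ i, i < k ∧ lab p i b ≠ b) →
    Relation.ReflTransGen (fun x y => ∃ i, i < k ∧ lab p i = Equiv.swap x y) a b

/-- The set of positions of the values in `E` in the one-line notation of `w`,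
i.e. `w⁻¹(E)`. -/
def posSet {n : ℕ} (w : Pm n) (E : Finset (Fin n)) : Finset (Fin n) := E.image ⇑w.symm

lemma mem_posSet {n : ℕ} {w : Pm n} {E : Finset (Fin n)} {x : Fin n} :
    x ∈ posSet w E ↔ w x ∈ E := by
  constructor
  · intro hx
    rcases Finset.mem_image.mp hx with ⟨y, hy, rfl⟩
    simpa using hy
  · intro hx
    exact Finset.mem_image.mpr ⟨w x, hx, by simp⟩

lemma posSet_card {n : ℕ} (w : Pm n) (E : Finset (Fin n)) : (posSet w E).card = E.card :=
  Finset.card_image_of_injective _ w.symm.injective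

/-- The "pattern" map `r_E : 𝔖ₙ → 𝔖ₘ` (`|E| = m`): delete from the one-line notation of
`w` the values not in `E`, and renumber the values in `E` via the order preserving
bijection `E → [m]`. -/
noncomputable def rE (n m : ℕ) (E : Finset (Fin n)) (hm : E.card = m) (w : Pm n) : Pm m :=
  (((posSet w E).orderIsoOfFin (by rw [posSet_card, hm])).toEquiv.trans
    (⟨fun x => ⟨w x.1, mem_posSet.mp x.2⟩,
      fun y => ⟨w.symm y.1, mem_posSet.mpr (by simp [y.2])⟩,
      fun x => Subtype.ext (by simp),
      fun y => Subtype.ext (by simp)⟩ :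
        {x // x ∈ posSet w E} ≃ {y // y ∈ E})).trans (E.orderIsoOfFin hm).toEquiv.symm

/-- `r_E` applied to each vertex of a path. -/
noncomputable def rEPath (n m : ℕ) (E : Finset (Fin n)) (hm : E.card = m)
    (p : ℕ → Pm n) : ℕ → Pm m := fun j => rE n m E hm (p j)

/-- The total order `⪯_{r_E}` induced on the transpositions of `𝔖ₘ` by a reflection
ordering of `𝔖ₙ` via the order preserving bijection `r_E⁻¹ : [m] → E`. -/
def inducedOrd (n m : ℕ) (ord : ReflOrder n) (E : Finset (Fin n)) (hm : E.card = m) :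
    Pm m → Pm m → Prop := fun s t =>
  ∃ a b c d : Fin m, a < b ∧ c < d ∧ s = Equiv.swap a b ∧ t = Equiv.swap c d ∧
    ord.le (Equiv.swap (↑(E.orderIsoOfFin hm a)) (↑(E.orderIsoOfFin hm b)))
           (Equiv.swap (↑(E.orderIsoOfFin hm c)) (↑(E.orderIsoOfFin hm d)))

/-- Isomorphism of (unlabelled, or labelled with determined labels) directed graphs. -/
def GraphIso {α β : Type*} (V1 : Set α) (E1 : α → α → Prop)
    (V2 : Set β) (E2 : β → β → Prop) : Prop :=
  ∃ φ : α → β, Set.BijOn φ V1 V2 ∧ ∀ x ∈ V1, ∀ y ∈ V1, (E1 x y ↔ E2 (φ x) (φ y))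

/-- Vertices of the `k`-crown: `u`, `a₁,…,a_k`, `b₁,…,b_k`, `v`. -/
def CrownV (k : ℕ) : Type := (Unit ⊕ Fin k) ⊕ (Fin k ⊕ Unit)

/-- Edges of the `k`-crown: `u → aᵢ`, `aᵢ → bᵢ`, `a_{i+1} → bᵢ` (indices mod `k`),
`bᵢ → v`. -/
def crownEdge (k : ℕ) : CrownV k → CrownV k → Prop
  | Sum.inl (Sum.inl _), Sum.inl (Sum.inr _) => True
  | Sum.inl (Sum.inr i), Sum.inr (Sum.inl j) => i.val = j.val ∨ i.val = (j.val + 1) % k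
  | Sum.inr (Sum.inl _), Sum.inr (Sum.inr _) => True
  | _, _ => False

/-- The set `W₁ · W₂` (internal direct product when supports are disjoint). -/
def dprod {n : ℕ} (W1 W2 : Subgroup (Pm n)) : Set (Pm n) :=
  {w | ∃ w1 ∈ W1, ∃ w2 ∈ W2, w = w1 * w2}

/-- A path in the subgraph of the Bruhat graph induced on the subset `X`. -/
def IsPathIn (n : ℕ) (X : Set (Pm n)) (h : ℕ) (u v : Pm n) (p : ℕ → Pm n) : Prop :=
  IsPath n h u v p ∧ ∀ j, p j ∈ X

/-- Flip step within the induced subgraph on `X`. -/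
def FlipStepIn (n : ℕ) (X : Set (Pm n)) (h : ℕ) (u v : Pm n) (p q : ℕ → Pm n) : Prop :=
  IsPathIn n X h u v p ∧ IsPathIn n X h u v q ∧ ∃ i, FlipAt h i p q

/-- Flipclass of paths in the induced subgraph on `X`. -/
def IsFlipclassIn (n : ℕ) (X : Set (Pm n)) (h : ℕ) (u v : Pm n)
    (F : Set (ℕ → Pm n)) : Prop :=
  ∃ p, IsPathIn n X h u v p ∧ F = {q | Relation.ReflTransGen (FlipStepIn n X h u v) p q}

/-- `Δ` (a path of length `k`, normalized) is the projection (deduplication) of the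
vertexwise-projected sequence `s` (defined on `0,…,hh`). -/
def IsProj (n hh k : ℕ) (s Δ : ℕ → Pm n) : Prop :=
  ∃ φ : ℕ → ℕ, Monotone φ ∧ φ 0 = 0 ∧ (∀ j, hh ≤ j → φ j = k) ∧
    (∀ j, j < hh →
      (s (j + 1) = s j ∧ φ (j + 1) = φ j) ∨ (s (j + 1) ≠ s j ∧ φ (j + 1) = φ j + 1)) ∧
    (∀ j, j ≤ hh → s j = Δ (φ j)) ∧ ∀ j, k ≤ j → Δ j = Δ k
lemma len_lt_of_pos_lt {n : ℕ} (w : Pm n) (x y : Fin n) (hxy : x < y)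
    (hij : w⁻¹ x < w⁻¹ y) : len w < len (Equiv.swap x y * w) := by
  classical
  set i := w⁻¹ x with hi
  set j := w⁻¹ y with hj
  have hwi : w i = x := by simp [hi]
  have hwj : w j = y := by simp [hj]
  set w' := Equiv.swap x y * w with hw'
  have hw'app : ∀ q, w' q = Equiv.swap x y (w q) := fun q => rfl
  have hw'i : w' i = y := by rw [hw'app, hwi, Equiv.swap_apply_left]
  have hw'j : w' j = x := by rw [hw'app, hwj, Equiv.swap_apply_right]
  have hne : i ≠ j := ne_of_lt hij
  have hvali : ∀ q, w q = x → q = i := fun q hq => w.injective (hq.trans hwi.symm)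
  have hvalj : ∀ q, w q = y → q = j := fun q hq => w.injective (hq.trans hwj.symm)
  have hw'other : ∀ q, q ≠ i → q ≠ j → w' q = w q := by
    intro q hqi hqj
    exact Equiv.swap_apply_of_ne_of_ne (fun h => hqi (hvali q h)) (fun h => hqj (hvalj q h))
  set A := Finset.univ.filter (fun q : Fin n × Fin n => q.1 < q.2 ∧ w q.2 < w q.1) with hA
  set A' := Finset.univ.filter (fun q : Fin n × Fin n => q.1 < q.2 ∧ w' q.2 < w' q.1) with hA'
  have hmemA : ∀ q : Fin n × Fin n, q ∈ A ↔ q.1 < q.2 ∧ w q.2 < w q.1 := by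
    intro q; simp [hA]
  have hmemA' : ∀ q : Fin n × Fin n, q ∈ A' ↔ q.1 < q.2 ∧ w' q.2 < w' q.1 := by
    intro q; simp [hA']
  set f : Fin n × Fin n → Fin n × Fin n := fun q =>
    if q.2 = i ∧ x < w q.1 ∧ w q.1 < y then (q.1, j)
    else if q.1 = j ∧ x < w q.2 ∧ w q.2 < y then (i, q.2)
    else q with hf
  set finv : Fin n × Fin n → Fin n × Fin n := fun q =>
    if q.2 = j ∧ q.1 ≠ i ∧ x < w q.1 ∧ w q.1 < y then (q.1, i)
    else if q.1 = i ∧ q.2 ≠ j ∧ x < w q.2 ∧ w q.2 < y then (j, q.2)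
    else q with hfinv
  have hf1 : ∀ q : Fin n × Fin n, (q.2 = i ∧ x < w q.1 ∧ w q.1 < y) → f q = (q.1, j) :=
    fun q hq => if_pos hq
  have hf2 : ∀ q : Fin n × Fin n, ¬(q.2 = i ∧ x < w q.1 ∧ w q.1 < y) →
      (q.1 = j ∧ x < w q.2 ∧ w q.2 < y) → f q = (i, q.2) :=
    fun q h1 h2 => (if_neg h1).trans (if_pos h2)
  have hf3 : ∀ q : Fin n × Fin n, ¬(q.2 = i ∧ x < w q.1 ∧ w q.1 < y) →
      ¬(q.1 = j ∧ x < w q.2 ∧ w q.2 < y) → f q = q :=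
    fun q h1 h2 => (if_neg h1).trans (if_neg h2)
  have hg1 : ∀ q : Fin n × Fin n, (q.2 = j ∧ q.1 ≠ i ∧ x < w q.1 ∧ w q.1 < y) →
      finv q = (q.1, i) := fun q hq => if_pos hq
  have hg2 : ∀ q : Fin n × Fin n, ¬(q.2 = j ∧ q.1 ≠ i ∧ x < w q.1 ∧ w q.1 < y) →
      (q.1 = i ∧ q.2 ≠ j ∧ x < w q.2 ∧ w q.2 < y) → finv q = (j, q.2) :=
    fun q h1 h2 => (if_neg h1).trans (if_pos h2)
  have hg3 : ∀ q : Fin n × Fin n, ¬(q.2 = j ∧ q.1 ≠ i ∧ x < w q.1 ∧ w q.1 < y) →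
      ¬(q.1 = i ∧ q.2 ≠ j ∧ x < w q.2 ∧ w q.2 < y) → finv q = q :=
    fun q h1 h2 => (if_neg h1).trans (if_neg h2)
  have hmain : ∀ q ∈ A, f q ∈ A' ∧ f q ≠ (i, j) ∧ finv (f q) = q := by
    rintro ⟨q1, q2⟩ hq
    obtain ⟨hlt, hinv⟩ := (hmemA (q1, q2)).mp hq
    simp only at hlt hinv
    by_cases hb1 : q2 = i ∧ x < w q1 ∧ w q1 < y
    · obtain ⟨hq2i, hx1, h1y⟩ := hb1
      have hfq : f (q1, q2) = (q1, j) := hf1 _ ⟨hq2i, hx1, h1y⟩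
      have hq1i : q1 ≠ i := ne_of_lt (hq2i ▸ hlt)
      have hq1j : q1 ≠ j := fun h => absurd h1y (by rw [h, hwj]; exact lt_irrefl _)
      refine ⟨?_, ?_, ?_⟩
      · rw [hfq, hmemA']
        refine ⟨lt_trans (hq2i ▸ hlt) hij, ?_⟩
        show w' j < w' q1
        rw [hw'j, hw'other q1 hq1i hq1j]; exact hx1
      · rw [hfq]; intro hcon; exact hq1i (congrArg Prod.fst hcon)
      · rw [hfq, hg1 _ ⟨rfl, hq1i, hx1, h1y⟩, hq2i]
    · by_cases hb2 : q1 = j ∧ x < w q2 ∧ w q2 < y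
      · obtain ⟨hq1j, hx2, h2y⟩ := hb2
        have hfq : f (q1, q2) = (i, q2) := hf2 _ hb1 ⟨hq1j, hx2, h2y⟩
        have hq2j : q2 ≠ j := ne_of_gt (hq1j ▸ hlt)
        have hq2i : q2 ≠ i := fun h => absurd hx2 (by rw [h, hwi]; exact lt_irrefl _)
        refine ⟨?_, ?_, ?_⟩
        · rw [hfq, hmemA']
          refine ⟨lt_trans hij (hq1j ▸ hlt), ?_⟩
          show w' q2 < w' i
          rw [hw'i, hw'other q2 hq2i hq2j]; exact h2y
        · rw [hfq]; intro hcon; exact hq2j (congrArg Prod.snd hcon)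
        · rw [hfq, hg2 _ (fun hc => hq2j hc.1) ⟨rfl, hq2j, hx2, h2y⟩, hq1j]
      · have hfq : f (q1, q2) = (q1, q2) := hf3 _ hb1 hb2
        rw [hfq]
        by_cases hq2i : q2 = i
        · -- case A
          have hxlt : x < w q1 := by rw [hq2i, hwi] at hinv; exact hinv
          have hq1i : q1 ≠ i := ne_of_lt (hq2i ▸ hlt)
          have hq1j : q1 ≠ j := fun h => absurd (hq2i ▸ h ▸ hlt) (asymm hij)
          have hylt : y < w q1 :=
            lt_of_le_of_ne (le_of_not_gt fun hc => hb1 ⟨hq2i, hxlt, hc⟩)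
              (fun h => hq1j (hvalj q1 h.symm))
          refine ⟨?_, ?_, ?_⟩
          · rw [hmemA']
            refine ⟨hlt, ?_⟩
            show w' q2 < w' q1
            rw [hq2i, hw'i, hw'other q1 hq1i hq1j]; exact hylt
          · intro hcon; exact hq1i (congrArg Prod.fst hcon)
          · refine hg3 _ ?_ ?_
            · rintro ⟨hc, -⟩; exact hne (hq2i.symm.trans hc)
            · rintro ⟨hc, -⟩; exact hq1i hc
        · by_cases hq2j : q2 = j
          · -- case B
            have hylt : y < w q1 := by rw [hq2j, hwj] at hinv; exact hinv
            have hq1i : q1 ≠ i := fun h => absurd hylt (by rw [h, hwi]; exact asymm hxy)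
            have hq1j : q1 ≠ j := ne_of_lt (hq2j ▸ hlt)
            refine ⟨?_, ?_, ?_⟩
            · rw [hmemA']
              refine ⟨hlt, ?_⟩
              show w' q2 < w' q1
              rw [hq2j, hw'j, hw'other q1 hq1i hq1j]
              exact lt_trans hxy hylt
            · intro hcon; exact hq1i (congrArg Prod.fst hcon)
            · refine hg3 _ ?_ ?_
              · rintro ⟨-, -, -, hc⟩; exact asymm hylt hc
              · rintro ⟨hc, -⟩; exact hq1i hc
          · by_cases hq1i : q1 = i
            · -- case C
              have hltx : w q2 < x := by rw [hq1i, hwi] at hinv; exact hinv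
              have hq2j' : q2 ≠ j := fun h => absurd hltx (by rw [h, hwj]; exact asymm hxy)
              refine ⟨?_, ?_, ?_⟩
              · rw [hmemA']
                refine ⟨hlt, ?_⟩
                show w' q2 < w' q1
                rw [hq1i, hw'i, hw'other q2 hq2i hq2j']
                exact lt_trans hltx hxy
              · intro hcon; exact hq2j' (congrArg Prod.snd hcon)
              · refine hg3 _ ?_ ?_
                · rintro ⟨hc, -⟩; exact hq2j' hc
                · rintro ⟨-, -, hc, -⟩; exact asymm hltx hc
            · by_cases hq1j : q1 = j
              · -- case D
                have hlty : w q2 < y := by rw [hq1j, hwj] at hinv; exact hinv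
                have hltx : w q2 < x :=
                  lt_of_le_of_ne (le_of_not_gt fun hc => hb2 ⟨hq1j, hc, hlty⟩)
                    (fun h => hq2i (hvali q2 h))
                have hq2j' : q2 ≠ j := ne_of_gt (hq1j ▸ hlt)
                refine ⟨?_, ?_, ?_⟩
                · rw [hmemA']
                  refine ⟨hlt, ?_⟩
                  show w' q2 < w' q1
                  rw [hq1j, hw'j, hw'other q2 hq2i hq2j']
                  exact hltx
                · intro hcon; exact hq1i (congrArg Prod.fst hcon)
                · refine hg3 _ ?_ ?_
                  · rintro ⟨hc, -⟩; exact hq2j' hc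
                  · rintro ⟨hc, -⟩; exact hq1i hc
              · -- case E
                refine ⟨?_, ?_, ?_⟩
                · rw [hmemA']
                  refine ⟨hlt, ?_⟩
                  show w' q2 < w' q1
                  rw [hw'other q2 hq2i hq2j, hw'other q1 hq1i hq1j]
                  exact hinv
                · intro hcon; exact hq1i (congrArg Prod.fst hcon)
                · refine hg3 _ ?_ ?_
                  · rintro ⟨hc, -⟩; exact hq2j hc
                  · rintro ⟨hc, -⟩; exact hq1i hc
  have hinj : Set.InjOn f ↑A := by
    intro a ha b hb hab
    rw [← (hmain a (Finset.mem_coe.mp ha)).2.2, ← (hmain b (Finset.mem_coe.mp hb)).2.2, hab]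
  have hsub : A.image f ⊆ A'.erase (i, j) := by
    intro q hq
    obtain ⟨a, ha, rfl⟩ := Finset.mem_image.mp hq
    exact Finset.mem_erase.mpr ⟨(hmain a ha).2.1, (hmain a ha).1⟩
  have hijA' : (i, j) ∈ A' := by
    rw [hmemA']
    exact ⟨hij, by show w' j < w' i; rw [hw'i, hw'j]; exact hxy⟩
  calc len w = A.card := rfl
    _ = (A.image f).card := (Finset.card_image_of_injOn hinj).symm
    _ ≤ (A'.erase (i, j)).card := Finset.card_le_card hsub
    _ < A'.card := Finset.card_erase_lt_of_mem hijA'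
    _ = len w' := rfl

section RE
variable {n m : ℕ} (E : Finset (Fin n)) (hm : E.card = m)

lemma oif_coe_congr {s t : Finset (Fin n)} (hst : s = t) (hs : s.card = m) (ht : t.card = m)
    (k : Fin m) : (↑(s.orderIsoOfFin hs k) : Fin n) = ↑(t.orderIsoOfFin ht k) := by
  subst hst; rfl

lemma posSet_card' (hm : E.card = m) (w : Pm n) : (posSet w E).card = m := by
  rw [posSet_card, hm]

lemma rE_apply (w : Pm n) (k : Fin m) :
    rE n m E hm w k = (E.orderIsoOfFin hm).symm
      ⟨w ((posSet w E).orderIsoOfFin (posSet_card' E hm w) k),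
       mem_posSet.mp (((posSet w E).orderIsoOfFin (posSet_card' E hm w)) k).2⟩ := rfl

lemma fix_mem_iff {g : Pm n} (hg : ∀ z, z ∉ E → g z = z) (z : Fin n) :
    g z ∈ E ↔ z ∈ E := by
  constructor
  · intro h
    by_contra hz
    rw [hg z hz] at h
    exact hz h
  · intro h
    by_contra hgz
    have := hg (g z) hgz
    have hz : g z = z := g.injective this
    rw [hz] at hgz
    exact hgz h

lemma posSet_fix_mul {g : Pm n} (hg : ∀ z, z ∉ E → g z = z) (w : Pm n) :
    posSet (g * w) E = posSet w E := by
  ext x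
  rw [mem_posSet, mem_posSet]
  exact fix_mem_iff E hg (w x)

lemma posSet_fix_self {g : Pm n} (hg : ∀ z, z ∉ E → g z = z) :
    posSet g E = E := by
  ext x
  rw [mem_posSet]
  exact fix_mem_iff E hg x

lemma rE_apply_symm {g : Pm n} (hg : ∀ z, z ∉ E → g z = z) (z : Fin n) (hz : z ∈ E) :
    rE n m E hm g ((E.orderIsoOfFin hm).symm ⟨z, hz⟩) =
      (E.orderIsoOfFin hm).symm ⟨g z, (fix_mem_iff E hg z).mpr hz⟩ := by
  rw [rE_apply]
  congr 1
  apply Subtype.ext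
  show g _ = g z
  congr 1
  rw [oif_coe_congr (posSet_fix_self E hg) _ hm]
  exact congrArg Subtype.val ((E.orderIsoOfFin hm).apply_symm_apply ⟨z, hz⟩)

lemma rE_mul {g : Pm n} (hg : ∀ z, z ∉ E → g z = z) (w : Pm n) :
    rE n m E hm (g * w) = rE n m E hm g * rE n m E hm w := by
  apply Equiv.ext
  intro k
  rw [Equiv.Perm.mul_apply, rE_apply E hm w k, rE_apply_symm E hm hg, rE_apply]
  congr 1
  apply Subtype.ext
  show (g * w) _ = g (w _)
  rw [Equiv.Perm.mul_apply]
  congr 2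
  exact oif_coe_congr (posSet_fix_mul E hg w) _ _ _

lemma rE_apply_symm' {g : Pm n} (hg : ∀ z, z ∉ E → g z = z) (y : {v // v ∈ E}) :
    rE n m E hm g ((E.orderIsoOfFin hm).symm y) =
      (E.orderIsoOfFin hm).symm ⟨g ↑y, (fix_mem_iff E hg ↑y).mpr y.2⟩ := by
  obtain ⟨z, hz⟩ := y
  exact rE_apply_symm E hm hg z hz

lemma rE_swap {e f : Fin n} (he : e ∈ E) (hf : f ∈ E) :
    rE n m E hm (Equiv.swap e f) =
      Equiv.swap ((E.orderIsoOfFin hm).symm ⟨e, he⟩) ((E.orderIsoOfFin hm).symm ⟨f, hf⟩) := by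
  have hfix : ∀ z, z ∉ E → Equiv.swap e f z = z := by
    intro z hz
    exact Equiv.swap_apply_of_ne_of_ne (fun h => hz (h ▸ he)) (fun h => hz (h ▸ hf))
  apply Equiv.ext
  intro k
  obtain ⟨y, rfl⟩ : ∃ y, (E.orderIsoOfFin hm).symm y = k :=
    ⟨(E.orderIsoOfFin hm) k, by simp⟩
  apply (E.orderIsoOfFin hm).injective
  rw [rE_apply_symm' E hm hfix y, OrderIso.apply_symm_apply]
  rcases eq_or_ne y ⟨e, he⟩ with hy | hy
  · subst hy
    conv_rhs => rw [Equiv.swap_apply_left, OrderIso.apply_symm_apply]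
    exact Subtype.ext (Equiv.swap_apply_left e f)
  · rcases eq_or_ne y ⟨f, hf⟩ with hy' | hy'
    · subst hy'
      conv_rhs => rw [Equiv.swap_apply_right, OrderIso.apply_symm_apply]
      exact Subtype.ext (Equiv.swap_apply_right e f)
    · have hce : (↑y : Fin n) ≠ e := fun h => hy (Subtype.ext h)
      have hcf : (↑y : Fin n) ≠ f := fun h => hy' (Subtype.ext h)
      conv_rhs => rw [Equiv.swap_apply_of_ne_of_ne
          (fun h => hy ((E.orderIsoOfFin hm).symm.injective h))
          (fun h => hy' ((E.orderIsoOfFin hm).symm.injective h)),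
        OrderIso.apply_symm_apply]
      exact Subtype.ext (Equiv.swap_apply_of_ne_of_ne hce hcf)

lemma rE_inj {a b : Pm n} (hps : posSet a E = posSet b E)
    (hoff : ∀ q, q ∉ posSet a E → a q = b q)
    (hr : rE n m E hm a = rE n m E hm b) : a = b := by
  apply Equiv.ext
  intro q
  by_cases hq : q ∈ posSet a E
  · set k := ((posSet a E).orderIsoOfFin (posSet_card' E hm a)).symm ⟨q, hq⟩ with hkdef
    have hka : rE n m E hm a k = rE n m E hm b k := by rw [hr]
    rw [rE_apply E hm a k, rE_apply E hm b k] at hka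
    have h1 : (↑(((posSet a E).orderIsoOfFin (posSet_card' E hm a)) k) : Fin n) = q := by
      rw [hkdef]
      simp
    have h2 : (↑(((posSet b E).orderIsoOfFin (posSet_card' E hm b)) k) : Fin n) = q := by
      rw [← oif_coe_congr hps (posSet_card' E hm a) (posSet_card' E hm b) k]
      exact h1
    have := (E.orderIsoOfFin hm).symm.injective hka
    have hval := congrArg Subtype.val this
    simp only at hval
    rw [h1, h2] at hval
    exact hval
  · exact hoff q hq

lemma rE_inv_apply (a : Pm n) (e : Fin n) (he : e ∈ E) :
    (rE n m E hm a)⁻¹ ((E.orderIsoOfFin hm).symm ⟨e, he⟩) =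
      ((posSet a E).orderIsoOfFin (posSet_card' E hm a)).symm
        ⟨a⁻¹ e, mem_posSet.mpr (by simp [he])⟩ := by
  set k := ((posSet a E).orderIsoOfFin (posSet_card' E hm a)).symm
    ⟨a⁻¹ e, mem_posSet.mpr (by simp [he])⟩ with hkdef
  have : rE n m E hm a k = (E.orderIsoOfFin hm).symm ⟨e, he⟩ := by
    rw [rE_apply]
    congr 1
    apply Subtype.ext
    show a _ = e
    rw [hkdef]
    simp
  rw [← this, Equiv.Perm.inv_def, Equiv.symm_apply_apply]

lemma len_lt_swap_iff {N : ℕ} (w : Pm N) (x y : Fin N) (hxy : x < y) :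
    len w < len (Equiv.swap x y * w) ↔ w⁻¹ x < w⁻¹ y := by
  constructor
  · intro hlen
    by_contra hc
    have hne : w⁻¹ x ≠ w⁻¹ y := fun h => absurd (w⁻¹.injective h) (ne_of_lt hxy)
    have hlt : w⁻¹ y < w⁻¹ x := lt_of_le_of_ne (le_of_not_gt hc) hne.symm
    set w' := Equiv.swap x y * w with hw'
    have h1 : w'⁻¹ x = w⁻¹ y := by
      rw [hw', mul_inv_rev, Equiv.Perm.mul_apply]
      congr 1
      simp
    have h2 : w'⁻¹ y = w⁻¹ x := by
      rw [hw', mul_inv_rev, Equiv.Perm.mul_apply]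
      congr 1
      simp
    have := len_lt_of_pos_lt w' x y hxy (by rw [h1, h2]; exact hlt)
    have hw'w : Equiv.swap x y * w' = w := by
      rw [hw', ← mul_assoc, Equiv.swap_mul_self, one_mul]
    rw [hw'w] at this
    exact absurd (lt_trans hlen this) (lt_irrefl _)
  · exact len_lt_of_pos_lt w x y hxy

lemma len_rE_iff {a : Pm n} {e f : Fin n} (he : e ∈ E) (hf : f ∈ E) (hef : e < f) :
    len a < len (Equiv.swap e f * a) ↔
      len (rE n m E hm a) < len (rE n m E hm (Equiv.swap e f * a)) := by
  have hfix : ∀ z, z ∉ E → Equiv.swap e f z = z := by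
    intro z hz
    exact Equiv.swap_apply_of_ne_of_ne (fun h => hz (h ▸ he)) (fun h => hz (h ▸ hf))
  rw [rE_mul E hm hfix, rE_swap E hm he hf]
  have hklt : (E.orderIsoOfFin hm).symm ⟨e, he⟩ < (E.orderIsoOfFin hm).symm ⟨f, hf⟩ := by
    rw [(E.orderIsoOfFin hm).symm.lt_iff_lt]
    exact Subtype.mk_lt_mk.mpr hef
  rw [len_lt_swap_iff a e f hef, len_lt_swap_iff (rE n m E hm a) _ _ hklt,
    rE_inv_apply, rE_inv_apply,
    ((posSet a E).orderIsoOfFin (posSet_card' E hm a)).symm.lt_iff_lt, Subtype.mk_lt_mk]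

end RE

section Main
variable {n h : ℕ} {u v : Pm n} {F : Set (ℕ → Pm n)} {E : Finset (Fin n)} {m : ℕ}

lemma swap_fix {e f : Fin n} (he : e ∈ E) (hf : f ∈ E) :
    ∀ z, z ∉ E → Equiv.swap e f z = z := fun z hz =>
  Equiv.swap_apply_of_ne_of_ne (fun hc => hz (hc ▸ he)) (fun hc => hz (hc ▸ hf))

lemma mem_isPath (hF : IsFlipclass n h u v F) {p : ℕ → Pm n} (hp : p ∈ F) :
    IsPath n h u v p := by
  obtain ⟨p₀, hp₀, hFeq⟩ := hF
  rw [hFeq] at hp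
  rcases Relation.ReflTransGen.cases_tail hp with heq | ⟨c, _, hstep⟩
  · rw [heq]; exact hp₀
  · exact hstep.2.1

lemma lab_fix (hE : ∀ a : Fin n, a ∈ E ↔ ∃ p ∈ F, ∃ i, i < h ∧ lab p i a ≠ a)
    {p : ℕ → Pm n} (hp : p ∈ F) {i : ℕ} (hi : i < h) :
    ∀ z, z ∉ E → lab p i z = z := by
  intro z hz
  by_contra hne
  exact hz ((hE z).mpr ⟨p, hp, i, hi, hne⟩)

lemma lab_swapE (hF : IsFlipclass n h u v F)
    (hE : ∀ a : Fin n, a ∈ E ↔ ∃ p ∈ F, ∃ i, i < h ∧ lab p i a ≠ a)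
    {p : ℕ → Pm n} (hp : p ∈ F) {i : ℕ} (hi : i < h) :
    ∃ e f, e ∈ E ∧ f ∈ E ∧ e < f ∧ lab p i = Equiv.swap e f := by
  obtain ⟨x, y, hxy, hswap⟩ := ((mem_isPath hF hp).2.2 i hi).1
  have hlab : lab p i = Equiv.swap x y := hswap
  have hx : x ∈ E := (hE x).mpr ⟨p, hp, i, hi, by rw [hlab, Equiv.swap_apply_left]; exact hxy.symm⟩
  have hy : y ∈ E := (hE y).mpr ⟨p, hp, i, hi, by rw [hlab, Equiv.swap_apply_right]; exact hxy⟩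
  rcases lt_or_gt_of_ne hxy with hlt | hgt
  · exact ⟨x, y, hx, hy, hlt, hlab⟩
  · exact ⟨y, x, hy, hx, hgt, by rw [hlab, Equiv.swap_comm]⟩

lemma vertex_fix (hF : IsFlipclass n h u v F)
    (hE : ∀ a : Fin n, a ∈ E ↔ ∃ p ∈ F, ∃ i, i < h ∧ lab p i a ≠ a)
    {p : ℕ → Pm n} (hp : p ∈ F) (j : ℕ) :
    ∀ z, z ∉ E → (p j * u⁻¹) z = z := by
  have hpath := mem_isPath hF hp
  have key : ∀ j, j ≤ h → ∀ z, z ∉ E → (p j * u⁻¹) z = z := by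
    intro j
    induction j with
    | zero =>
      intro _ z hz
      rw [hpath.1]
      simp
    | succ j ih =>
      intro hj z hz
      have hjh : j < h := hj
      have hdec : p (j + 1) = lab p j * p j := by
        rw [lab]
        group
      rw [hdec]
      have : lab p j * p j * u⁻¹ = lab p j * (p j * u⁻¹) := by group
      rw [this, Equiv.Perm.mul_apply, ih (le_of_lt hjh) z hz]
      exact lab_fix hE hp hjh z hz
  by_cases hj : j ≤ h
  · exact key j hj
  · have : p j = p h := by
      rw [hpath.2.1 j (le_of_not_ge hj), hpath.2.1 h (le_refl h)]
    rw [this]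
    exact key h (le_refl h)

lemma vertex_posSet (hF : IsFlipclass n h u v F)
    (hE : ∀ a : Fin n, a ∈ E ↔ ∃ p ∈ F, ∃ i, i < h ∧ lab p i a ≠ a)
    {p : ℕ → Pm n} (hp : p ∈ F) (j : ℕ) :
    posSet (p j) E = posSet u E ∧ ∀ q, q ∉ posSet u E → p j q = u q := by
  have hfix := vertex_fix hF hE hp j
  have hdec : p j = (p j * u⁻¹) * u := by group
  constructor
  · rw [hdec]
    exact posSet_fix_mul E hfix u
  · intro q hq
    have : u q ∉ E := fun hc => hq (mem_posSet.mpr hc)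
    calc p j q = ((p j * u⁻¹) * u) q := by rw [← hdec]
      _ = (p j * u⁻¹) (u q) := rfl
      _ = u q := hfix (u q) this

lemma rE_inj_vertex (hF : IsFlipclass n h u v F)
    (hE : ∀ a : Fin n, a ∈ E ↔ ∃ p ∈ F, ∃ i, i < h ∧ lab p i a ≠ a)
    (hm : E.card = m)
    {p q : ℕ → Pm n} (hp : p ∈ F) (hq : q ∈ F) {i j : ℕ}
    (hr : rE n m E hm (p i) = rE n m E hm (q j)) : p i = q j := by
  obtain ⟨hps1, hoff1⟩ := vertex_posSet hF hE hp i
  obtain ⟨hps2, hoff2⟩ := vertex_posSet hF hE hq j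
  exact rE_inj E hm (hps1.trans hps2.symm)
    (fun x hx => by
      rw [hps1] at hx
      rw [hoff1 x hx, hoff2 x hx]) hr

lemma lab_rE (hF : IsFlipclass n h u v F)
    (hE : ∀ a : Fin n, a ∈ E ↔ ∃ p ∈ F, ∃ i, i < h ∧ lab p i a ≠ a)
    (hm : E.card = m)
    {p : ℕ → Pm n} (hp : p ∈ F) {i : ℕ} (hi : i < h) :
    rE n m E hm (lab p i) = lab (rEPath n m E hm p) i := by
  have hdec : p (i + 1) = lab p i * p i := by rw [lab]; group
  have hfix := lab_fix hE hp hi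
  have : rE n m E hm (p (i + 1)) = rE n m E hm (lab p i) * rE n m E hm (p i) := by
    rw [hdec]
    exact rE_mul E hm hfix (p i)
  rw [lab]
  show rE n m E hm (lab p i) = rE n m E hm (p (i+1)) * (rE n m E hm (p i))⁻¹
  rw [this]
  group

lemma bedge_rE (hF : IsFlipclass n h u v F)
    (hE : ∀ a : Fin n, a ∈ E ↔ ∃ p ∈ F, ∃ i, i < h ∧ lab p i a ≠ a)
    (hm : E.card = m)
    {p : ℕ → Pm n} (hp : p ∈ F) {i : ℕ} (hi : i < h) :
    BEdge (rE n m E hm (p i)) (rE n m E hm (p (i + 1))) := by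
  obtain ⟨e, f, he, hf, hef, hlab⟩ := lab_swapE hF hE hp hi
  have hdec : p (i + 1) = Equiv.swap e f * p i := by rw [← hlab, lab]; group
  have hredec : rE n m E hm (p (i + 1)) = rE n m E hm (Equiv.swap e f) * rE n m E hm (p i) := by
    rw [hdec]
    exact rE_mul E hm (swap_fix he hf) (p i)
  constructor
  · refine ⟨(E.orderIsoOfFin hm).symm ⟨e, he⟩, (E.orderIsoOfFin hm).symm ⟨f, hf⟩, ?_, ?_⟩
    · intro hc
      exact (ne_of_lt hef) (Subtype.mk_eq_mk.mp ((E.orderIsoOfFin hm).symm.injective hc))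
    · rw [hredec, ← rE_swap E hm he hf]
      group
  · have hlen : len (p i) < len (p (i + 1)) := ((mem_isPath hF hp).2.2 i hi).2
    rw [hdec] at hlen
    have hres := (len_rE_iff E hm (a := p i) he hf hef).mp hlen
    rw [← hdec] at hres
    exact hres

lemma isPath_rE (hF : IsFlipclass n h u v F)
    (hE : ∀ a : Fin n, a ∈ E ↔ ∃ p ∈ F, ∃ i, i < h ∧ lab p i a ≠ a)
    (hm : E.card = m)
    {p : ℕ → Pm n} (hp : p ∈ F) :
    IsPath m h (rE n m E hm u) (rE n m E hm v) (rEPath n m E hm p) := by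
  have hpath := mem_isPath hF hp
  refine ⟨?_, ?_, ?_⟩
  · show rE n m E hm (p 0) = rE n m E hm u
    rw [hpath.1]
  · intro j hj
    show rE n m E hm (p j) = rE n m E hm v
    rw [hpath.2.1 j hj]
  · intro i hi
    exact bedge_rE hF hE hm hp hi

lemma flipAt_rE (hF : IsFlipclass n h u v F)
    (hE : ∀ a : Fin n, a ∈ E ↔ ∃ p ∈ F, ∃ i, i < h ∧ lab p i a ≠ a)
    (hm : E.card = m)
    {p q : ℕ → Pm n} (hp : p ∈ F) (hq : q ∈ F) {i : ℕ}
    (hflip : FlipAt h i p q) :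
    FlipAt h i (rEPath n m E hm p) (rEPath n m E hm q) := by
  obtain ⟨hi0, hih, hne, hagree⟩ := hflip
  refine ⟨hi0, hih, ?_, ?_⟩
  · intro hc
    exact hne (rE_inj_vertex hF hE hm hp hq hc)
  · intro j hj
    show rE n m E hm (p j) = rE n m E hm (q j)
    rw [hagree j hj]

lemma fix_inv {g : Pm n} (hg : ∀ z, z ∉ E → g z = z) :
    ∀ z, z ∉ E → g⁻¹ z = z := by
  intro z hz
  have := hg z hz
  conv_lhs => rw [← this]
  simp

lemma fix_mul {g g' : Pm n} (hg : ∀ z, z ∉ E → g z = z) (hg' : ∀ z, z ∉ E → g' z = z) :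
    ∀ z, z ∉ E → (g * g') z = z := by
  intro z hz
  rw [Equiv.Perm.mul_apply, hg' z hz, hg z hz]

lemma len_rE_iff' (hm : E.card = m) {a : Pm n} {e f : Fin n}
    (he : e ∈ E) (hf : f ∈ E) (hef : e ≠ f) :
    len a < len (Equiv.swap e f * a) ↔
      len (rE n m E hm a) < len (rE n m E hm (Equiv.swap e f * a)) := by
  rcases lt_or_gt_of_ne hef with hlt | hgt
  · exact len_rE_iff E hm he hf hlt
  · rw [Equiv.swap_comm]
    exact len_rE_iff E hm hf he hgt

lemma rE_eq_swap_pullback (hm : E.card = m) {g : Pm n}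
    (hg : ∀ z, z ∉ E → g z = z) {k l : Fin m} (hkl : k ≠ l)
    (hr : rE n m E hm g = Equiv.swap k l) :
    g = Equiv.swap (↑((E.orderIsoOfFin hm) k)) (↑((E.orderIsoOfFin hm) l)) := by
  set e : Fin n := ↑((E.orderIsoOfFin hm) k) with hedef
  set f : Fin n := ↑((E.orderIsoOfFin hm) l) with hfdef
  have he : e ∈ E := ((E.orderIsoOfFin hm) k).2
  have hf : f ∈ E := ((E.orderIsoOfFin hm) l).2
  have hswapr : rE n m E hm (Equiv.swap e f) = Equiv.swap k l := by
    rw [rE_swap E hm he hf]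
    congr 1
    · exact (E.orderIsoOfFin hm).symm_apply_apply k
    · exact (E.orderIsoOfFin hm).symm_apply_apply l
  apply rE_inj E hm (a := g) (b := Equiv.swap e f)
  · rw [posSet_fix_self E hg, posSet_fix_self E (swap_fix he hf)]
  · intro q hq
    rw [posSet_fix_self E hg] at hq
    rw [hg q hq, swap_fix he hf q hq]
  · rw [hr, hswapr]

lemma flip_lift (hF : IsFlipclass n h u v F)
    (hE : ∀ a : Fin n, a ∈ E ↔ ∃ p ∈ F, ∃ i, i < h ∧ lab p i a ≠ a)
    (hm : E.card = m)
    {p : ℕ → Pm n} (hp : p ∈ F) {q' : ℕ → Pm m}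
    (hstep : FlipStep m h (rE n m E hm u) (rE n m E hm v) (rEPath n m E hm p) q') :
    ∃ q, FlipStep n h u v p q ∧ rEPath n m E hm q = q' := by
  obtain ⟨hP1, hP2, i, hflip⟩ := hstep
  obtain ⟨hi0, hih, hnei, hagree⟩ := hflip
  obtain ⟨i', rfl⟩ : ∃ i', i = i' + 1 := ⟨i - 1, (Nat.succ_pred_eq_of_pos hi0).symm⟩
  have hpath := mem_isPath hF hp
  have hi'h : i' < h := Nat.lt_of_succ_lt hih
  have hq'lo : q' i' = rE n m E hm (p i') := (hagree i' (by omega)).symm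
  have hq'hi : q' (i' + 2) = rE n m E hm (p (i' + 2)) := (hagree (i' + 2) (by omega)).symm
  -- the first m-side edge of the flipped path
  obtain ⟨k, l, hkl, hs⟩ := (hP2.2.2 i' hi'h).1
  set e : Fin n := ↑((E.orderIsoOfFin hm) k) with hedef
  set f : Fin n := ↑((E.orderIsoOfFin hm) l) with hfdef
  have he : e ∈ E := ((E.orderIsoOfFin hm) k).2
  have hf : f ∈ E := ((E.orderIsoOfFin hm) l).2
  have hef : e ≠ f := fun hc =>
    hkl ((E.orderIsoOfFin hm).injective (Subtype.ext hc))
  have hswapr : rE n m E hm (Equiv.swap e f) = Equiv.swap k l := by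
    rw [rE_swap E hm he hf]
    congr 1
    · exact (E.orderIsoOfFin hm).symm_apply_apply k
    · exact (E.orderIsoOfFin hm).symm_apply_apply l
  set y : Pm n := Equiv.swap e f * p i' with hydef
  have hrey : rE n m E hm y = q' (i' + 1) := by
    rw [hydef, rE_mul E hm (swap_fix he hf) (p i'), hswapr, ← hq'lo, ← hs]
    group
  set q : ℕ → Pm n := fun j => if j = i' + 1 then y else p j with hqdef
  have hqat : q (i' + 1) = y := if_pos rfl
  have hqne : ∀ j, j ≠ i' + 1 → q j = p j := fun j hj => if_neg hj
  have hyne : p (i' + 1) ≠ y := by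
    intro hc
    apply hnei
    show rE n m E hm (p (i' + 1)) = q' (i' + 1)
    rw [hc, hrey]
  -- y has the support property relative to u
  have hyfix : ∀ z, z ∉ E → (y * u⁻¹) z = z := by
    have : y * u⁻¹ = Equiv.swap e f * (p i' * u⁻¹) := by rw [hydef]; group
    rw [this]
    exact fix_mul (swap_fix he hf) (vertex_fix hF hE hp i')
  -- first edge upstairs
  have hedge1 : BEdge (p i') y := by
    constructor
    · exact ⟨e, f, hef, by rw [hydef]; group⟩
    · have hlenm : len (q' i') < len (q' (i' + 1)) := (hP2.2.2 i' hi'h).2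
      rw [hq'lo, ← hrey, hydef] at hlenm
      exact (len_rE_iff' hm he hf hef).mpr hlenm
  -- second edge upstairs
  obtain ⟨k₂, l₂, hkl₂, hs₂⟩ := (hP2.2.2 (i' + 1) hih).1
  set e₂ : Fin n := ↑((E.orderIsoOfFin hm) k₂) with he₂def
  set f₂ : Fin n := ↑((E.orderIsoOfFin hm) l₂) with hf₂def
  have he₂ : e₂ ∈ E := ((E.orderIsoOfFin hm) k₂).2
  have hf₂ : f₂ ∈ E := ((E.orderIsoOfFin hm) l₂).2
  have hef₂ : e₂ ≠ f₂ := fun hc =>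
    hkl₂ ((E.orderIsoOfFin hm).injective (Subtype.ext hc))
  set g : Pm n := p (i' + 2) * y⁻¹ with hgdef
  have hgfix : ∀ z, z ∉ E → g z = z := by
    have : g = (p (i' + 2) * u⁻¹) * (y * u⁻¹)⁻¹ := by rw [hgdef]; group
    rw [this]
    exact fix_mul (vertex_fix hF hE hp (i' + 2)) (fix_inv hyfix)
  have hreg : rE n m E hm g = Equiv.swap k₂ l₂ := by
    have hdecomp : p (i' + 2) = g * y := by rw [hgdef]; group
    have hmul : rE n m E hm (p (i' + 2)) = rE n m E hm g * rE n m E hm y := by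
      rw [hdecomp]
      exact rE_mul E hm hgfix y
    have h2 : q' (i' + 2) = rE n m E hm g * q' (i' + 1) := by
      rw [hq'hi, hmul, hrey]
    rw [← hs₂, h2]
    group
  have hgswap : g = Equiv.swap e₂ f₂ := rE_eq_swap_pullback hm hgfix hkl₂ hreg
  have hedge2 : BEdge y (p (i' + 2)) := by
    constructor
    · exact ⟨e₂, f₂, hef₂, by rw [← hgswap, hgdef]⟩
    · have hlenm : len (q' (i' + 1)) < len (q' (i' + 2)) := (hP2.2.2 (i' + 1) hih).2
      have hdecomp : p (i' + 2) = Equiv.swap e₂ f₂ * y := by rw [← hgswap, hgdef]; group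
      rw [hq'hi, ← hrey, hdecomp] at hlenm
      have := (len_rE_iff' hm he₂ hf₂ hef₂).mpr hlenm
      rw [← hdecomp] at this
      exact this
  -- q is a path
  have hqpath : IsPath n h u v q := by
    refine ⟨?_, ?_, ?_⟩
    · rw [hqne 0 (by omega)]
      exact hpath.1
    · intro j hj
      rw [hqne j (by omega)]
      exact hpath.2.1 j hj
    · intro j hj
      by_cases hj1 : j = i'
      · subst hj1
        rw [hqne j (by omega), hqat]
        exact hedge1
      · by_cases hj2 : j = i' + 1
        · subst hj2
          rw [hqat, hqne (i' + 1 + 1) (by omega)]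
          exact hedge2
        · rw [hqne j hj2, hqne (j + 1) (by omega)]
          exact hpath.2.2 j hj
  refine ⟨q, ⟨hpath, hqpath, i' + 1, ?_⟩, ?_⟩
  · exact ⟨by omega, hih, by rw [hqat]; exact hyne, fun j hj => (hqne j hj).symm⟩
  · funext j
    by_cases hj : j = i' + 1
    · subst hj
      show rE n m E hm (q (i' + 1)) = q' (i' + 1)
      rw [hqat]
      exact hrey
    · show rE n m E hm (q j) = q' j
      rw [hqne j hj]
      exact hagree j hj

lemma mem_F_of_step (hF : IsFlipclass n h u v F) {p q : ℕ → Pm n} (hp : p ∈ F)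
    (hstep : FlipStep n h u v p q) : q ∈ F := by
  obtain ⟨p₀, hp₀, hFeq⟩ := hF
  rw [hFeq] at hp ⊢
  exact hp.tail hstep

lemma flipStep_rE (hF : IsFlipclass n h u v F)
    (hE : ∀ a : Fin n, a ∈ E ↔ ∃ p ∈ F, ∃ i, i < h ∧ lab p i a ≠ a)
    (hm : E.card = m)
    {p q : ℕ → Pm n} (hp : p ∈ F) (hq : q ∈ F) (hstep : FlipStep n h u v p q) :
    FlipStep m h (rE n m E hm u) (rE n m E hm v) (rEPath n m E hm p) (rEPath n m E hm q) := by
  obtain ⟨_, _, i, hflip⟩ := hstep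
  exact ⟨isPath_rE hF hE hm hp, isPath_rE hF hE hm hq, i, flipAt_rE hF hE hm hp hq hflip⟩

lemma image_is_flipclass (hF : IsFlipclass n h u v F)
    (hE : ∀ a : Fin n, a ∈ E ↔ ∃ p ∈ F, ∃ i, i < h ∧ lab p i a ≠ a)
    (hm : E.card = m) :
    IsFlipclass m h (rE n m E hm u) (rE n m E hm v) (rEPath n m E hm '' F) := by
  obtain ⟨p₀, hp₀, hFeq⟩ := id hF
  have hp₀F : p₀ ∈ F := by rw [hFeq]; exact Relation.ReflTransGen.refl
  refine ⟨rEPath n m E hm p₀, isPath_rE hF hE hm hp₀F, ?_⟩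
  ext q'
  simp only [Set.mem_image, Set.mem_setOf_eq]
  constructor
  · rintro ⟨p, hpF, rfl⟩
    have hrtg : Relation.ReflTransGen (FlipStep n h u v) p₀ p := by
      rw [hFeq] at hpF; exact hpF
    clear hpF
    induction hrtg with
    | refl => exact Relation.ReflTransGen.refl
    | @tail b c hab hbc ih =>
      have hbF : b ∈ F := by rw [hFeq]; exact hab
      have hcF : c ∈ F := mem_F_of_step hF hbF hbc
      exact ih.tail (flipStep_rE hF hE hm hbF hcF hbc)
  · intro hrtg
    induction hrtg with
    | refl => exact ⟨p₀, hp₀F, rfl⟩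
    | @tail b c hab hbc ih =>
      obtain ⟨p, hpF, rfl⟩ := ih
      obtain ⟨q, hstep, rfl⟩ := flip_lift hF hE hm hpF hbc
      exact ⟨q, mem_F_of_step hF hpF hstep, rfl⟩

lemma rEPath_injOn (hF : IsFlipclass n h u v F)
    (hE : ∀ a : Fin n, a ∈ E ↔ ∃ p ∈ F, ∃ i, i < h ∧ lab p i a ≠ a)
    (hm : E.card = m) :
    Set.InjOn (rEPath n m E hm) F := by
  intro p hp q hq hpq
  funext j
  exact rE_inj_vertex hF hE hm hp hq (congrFun hpq j)

lemma rE_bijOn_SV (hF : IsFlipclass n h u v F)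
    (hE : ∀ a : Fin n, a ∈ E ↔ ∃ p ∈ F, ∃ i, i < h ∧ lab p i a ≠ a)
    (hm : E.card = m) :
    Set.BijOn (rE n m E hm) (SV n h F) (SV m h (rEPath n m E hm '' F)) := by
  refine ⟨?_, ?_, ?_⟩
  · rintro a ⟨p, hp, i, hi, rfl⟩
    exact ⟨rEPath n m E hm p, ⟨p, hp, rfl⟩, i, hi, rfl⟩
  · rintro a ⟨p, hp, i, hi, rfl⟩ b ⟨q, hq, j, hj, rfl⟩ hab
    exact rE_inj_vertex hF hE hm hp hq hab
  · rintro b ⟨p', ⟨p, hp, rfl⟩, i, hi, rfl⟩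
    exact ⟨p i, ⟨p, hp, i, hi, rfl⟩, rfl⟩

lemma rE_SE_iff (hF : IsFlipclass n h u v F)
    (hE : ∀ a : Fin n, a ∈ E ↔ ∃ p ∈ F, ∃ i, i < h ∧ lab p i a ≠ a)
    (hm : E.card = m) {a b : Pm n} (ha : a ∈ SV n h F) (hb : b ∈ SV n h F) :
    SE n h F a b ↔ SE m h (rEPath n m E hm '' F) (rE n m E hm a) (rE n m E hm b) := by
  constructor
  · rintro ⟨p, hp, i, hi, h1, h2⟩
    exact ⟨rEPath n m E hm p, ⟨p, hp, rfl⟩, i, hi, by rw [← h1]; rfl, by rw [← h2]; rfl⟩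
  · rintro ⟨p', ⟨p, hp, rfl⟩, i, hi, h1, h2⟩
    obtain ⟨pa, hpa, ia, hia, rfl⟩ := ha
    obtain ⟨pb, hpb, ib, hib, rfl⟩ := hb
    have e1 : p i = pa ia := rE_inj_vertex hF hE hm hp hpa h1
    have e2 : p (i + 1) = pb ib := rE_inj_vertex hF hE hm hp hpb h2
    exact ⟨p, hp, i, hi, e1, e2⟩

lemma rE_bijOn_TSV (hF : IsFlipclass n h u v F)
    (hE : ∀ a : Fin n, a ∈ E ↔ ∃ p ∈ F, ∃ i, i < h ∧ lab p i a ≠ a)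
    (hm : E.card = m) :
    Set.BijOn (fun x : Pm n × ℕ => (rE n m E hm x.1, x.2)) (TSV n h F)
      (TSV m h (rEPath n m E hm '' F)) := by
  refine ⟨?_, ?_, ?_⟩
  · rintro ⟨a, i⟩ ⟨hi, p, hp, hpa⟩
    have hpa' : p i = a := hpa
    subst hpa'
    exact ⟨hi, rEPath n m E hm p, ⟨p, hp, rfl⟩, rfl⟩
  · rintro ⟨a, i⟩ ⟨hi, p, hp, hpa⟩ ⟨b, j⟩ ⟨hj, q, hq, hqb⟩ hab
    have hpa' : p i = a := hpa
    have hqb' : q j = b := hqb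
    subst hpa'
    subst hqb'
    have h2 : i = j := congrArg Prod.snd hab
    subst h2
    have h1 : rE n m E hm (p i) = rE n m E hm (q i) := congrArg Prod.fst hab
    rw [rE_inj_vertex hF hE hm hp hq h1]
  · rintro ⟨b, i⟩ ⟨hi, p', ⟨p, hp, rfl⟩, hpb⟩
    have hpb' : rE n m E hm (p i) = b := hpb
    subst hpb'
    exact ⟨(p i, i), ⟨hi, p, hp, rfl⟩, rfl⟩

lemma rE_TSE_iff (hF : IsFlipclass n h u v F)
    (hE : ∀ a : Fin n, a ∈ E ↔ ∃ p ∈ F, ∃ i, i < h ∧ lab p i a ≠ a)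
    (hm : E.card = m) {x y : Pm n × ℕ} (hx : x ∈ TSV n h F) (hy : y ∈ TSV n h F) :
    TSE n h F x y ↔
      TSE m h (rEPath n m E hm '' F) (rE n m E hm x.1, x.2) (rE n m E hm y.1, y.2) := by
  obtain ⟨a, i⟩ := x
  obtain ⟨b, j⟩ := y
  obtain ⟨hi, pa, hpa, hpaa⟩ := hx
  obtain ⟨hj, pb, hpb, hpbb⟩ := hy
  have hpaa' : pa i = a := hpaa
  have hpbb' : pb j = b := hpbb
  subst hpaa'
  subst hpbb'
  constructor
  · rintro ⟨h1, h2, p, hp, h3, h4⟩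
    have h1' : i < h := h1
    have h2' : j = i + 1 := h2
    refine ⟨h1', h2', rEPath n m E hm p, ⟨p, hp, rfl⟩, ?_, ?_⟩
    · show rE n m E hm (p i) = rE n m E hm (pa i)
      rw [show p i = pa i from h3]
    · show rE n m E hm (p (i + 1)) = rE n m E hm (pb j)
      rw [show p (i + 1) = pb j from h4]
  · rintro ⟨h1, h2, p', ⟨p, hp, rfl⟩, h3, h4⟩
    have h1' : i < h := h1
    have h2' : j = i + 1 := h2
    refine ⟨h1', h2', p, hp, ?_, ?_⟩
    · exact rE_inj_vertex hF hE hm hp hpa h3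
    · exact rE_inj_vertex hF hE hm hp hpb h4

lemma swap_eq_swap_of_lt {α : Type*} [DecidableEq α] [LinearOrder α] {a b c d : α} (hab : a < b) (hcd : c < d)
    (hEq : Equiv.swap a b = Equiv.swap c d) : a = c ∧ b = d := by
  have h1 : Equiv.swap c d a = b := by rw [← hEq]; exact Equiv.swap_apply_left a b
  by_cases hac : a = c
  · subst hac
    rw [Equiv.swap_apply_left] at h1
    exact ⟨rfl, h1.symm⟩
  · by_cases had : a = d
    · subst had
      rw [Equiv.swap_apply_right] at h1
      rw [← h1] at hab
      exact absurd hab (asymm hcd)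
    · rw [Equiv.swap_apply_of_ne_of_ne hac had] at h1
      exact absurd h1 (ne_of_lt hab)

lemma increasing_iff (hF : IsFlipclass n h u v F)
    (hE : ∀ a : Fin n, a ∈ E ↔ ∃ p ∈ F, ∃ i, i < h ∧ lab p i a ≠ a)
    (hm : E.card = m) (ord : ReflOrder n) {p : ℕ → Pm n} (hp : p ∈ F) :
    IncreasingRel h ord.le p ↔
      IncreasingRel h (inducedOrd n m ord E hm) (rEPath n m E hm p) := by
  constructor
  · intro hinc i hi
    have hi1 : i < h := Nat.lt_of_succ_lt hi
    obtain ⟨e, f, he, hf, hef, hlab⟩ := lab_swapE hF hE hp hi1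
    obtain ⟨e', f', he', hf', hef', hlab'⟩ := lab_swapE hF hE hp hi
    refine ⟨(E.orderIsoOfFin hm).symm ⟨e, he⟩, (E.orderIsoOfFin hm).symm ⟨f, hf⟩,
      (E.orderIsoOfFin hm).symm ⟨e', he'⟩, (E.orderIsoOfFin hm).symm ⟨f', hf'⟩, ?_, ?_, ?_, ?_, ?_⟩
    · exact (E.orderIsoOfFin hm).symm.lt_iff_lt.mpr (Subtype.mk_lt_mk.mpr hef)
    · exact (E.orderIsoOfFin hm).symm.lt_iff_lt.mpr (Subtype.mk_lt_mk.mpr hef')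
    · rw [← lab_rE hF hE hm hp hi1, hlab, rE_swap E hm he hf]
    · rw [← lab_rE hF hE hm hp hi, hlab', rE_swap E hm he' hf']
    · simp only [OrderIso.apply_symm_apply]
      have := hinc i hi
      rw [hlab, hlab'] at this
      exact this
  · intro hinc i hi
    have hi1 : i < h := Nat.lt_of_succ_lt hi
    obtain ⟨e, f, he, hf, hef, hlab⟩ := lab_swapE hF hE hp hi1
    obtain ⟨e', f', he', hf', hef', hlab'⟩ := lab_swapE hF hE hp hi
    obtain ⟨a, b, c, d, habs, hcds, hsab, hscd, hord⟩ := hinc i hi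
    have hlabr : lab (rEPath n m E hm p) i =
        Equiv.swap ((E.orderIsoOfFin hm).symm ⟨e, he⟩) ((E.orderIsoOfFin hm).symm ⟨f, hf⟩) := by
      rw [← lab_rE hF hE hm hp hi1, hlab, rE_swap E hm he hf]
    have hlabr' : lab (rEPath n m E hm p) (i + 1) =
        Equiv.swap ((E.orderIsoOfFin hm).symm ⟨e', he'⟩) ((E.orderIsoOfFin hm).symm ⟨f', hf'⟩) := by
      rw [← lab_rE hF hE hm hp hi, hlab', rE_swap E hm he' hf']
    have hef_lt : (E.orderIsoOfFin hm).symm ⟨e, he⟩ < (E.orderIsoOfFin hm).symm ⟨f, hf⟩ :=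
      (E.orderIsoOfFin hm).symm.lt_iff_lt.mpr (Subtype.mk_lt_mk.mpr hef)
    have hef_lt' : (E.orderIsoOfFin hm).symm ⟨e', he'⟩ < (E.orderIsoOfFin hm).symm ⟨f', hf'⟩ :=
      (E.orderIsoOfFin hm).symm.lt_iff_lt.mpr (Subtype.mk_lt_mk.mpr hef')
    obtain ⟨hac, hbd⟩ := swap_eq_swap_of_lt habs hef_lt (hsab.symm.trans hlabr)
    obtain ⟨hcc, hdd⟩ := swap_eq_swap_of_lt hcds hef_lt' (hscd.symm.trans hlabr')
    have h1 : (↑((E.orderIsoOfFin hm) a) : Fin n) = e := by rw [hac]; simp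
    have h2 : (↑((E.orderIsoOfFin hm) b) : Fin n) = f := by rw [hbd]; simp
    have h3 : (↑((E.orderIsoOfFin hm) c) : Fin n) = e' := by rw [hcc]; simp
    have h4 : (↑((E.orderIsoOfFin hm) d) : Fin n) = f' := by rw [hdd]; simp
    rw [h1, h2, h3, h4] at hord
    rw [hlab, hlab']
    exact hord

lemma rE_inj_fix (hm : E.card = m) {g g' : Pm n}
    (hg : ∀ z, z ∉ E → g z = z) (hg' : ∀ z, z ∉ E → g' z = z)
    (hr : rE n m E hm g = rE n m E hm g') : g = g' := by
  apply rE_inj E hm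
  · rw [posSet_fix_self E hg, posSet_fix_self E hg']
  · intro q hq
    rw [posSet_fix_self E hg] at hq
    rw [hg q hq, hg' q hq]
  · exact hr

lemma labelSet_mem_E (hE : ∀ a : Fin n, a ∈ E ↔ ∃ p ∈ F, ∃ i, i < h ∧ lab p i a ≠ a)
    {s : Pm n} (hs : s ∈ labelSet n h F) : ∀ z, z ∉ E → s z = z := by
  obtain ⟨p, hp, i, hi, rfl⟩ := hs
  exact lab_fix hE hp hi

lemma flipclassIso_rE (hF : IsFlipclass n h u v F)
    (hE : ∀ a : Fin n, a ∈ E ↔ ∃ p ∈ F, ∃ i, i < h ∧ lab p i a ≠ a)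
    (hm : E.card = m) :
    FlipclassIso n m h F (rEPath n m E hm '' F) := by
  refine ⟨rE n m E hm, rE n m E hm, rE_bijOn_SV hF hE hm, ?_, ?_, ?_, ?_, ?_⟩
  · -- BijOn (fun p => rE ∘ p) F F'
    refine ⟨?_, ?_, ?_⟩
    · intro p hp
      exact ⟨p, hp, rfl⟩
    · intro p hp q hq hpq
      exact rEPath_injOn hF hE hm hp hq hpq
    · rintro q' ⟨p, hp, rfl⟩
      exact ⟨p, hp, rfl⟩
  · intro p hp q hq i hflip
    exact flipAt_rE hF hE hm hp hq hflip
  · -- BijOn on labelSet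
    refine ⟨?_, ?_, ?_⟩
    · rintro t ⟨p, hp, i, hi, rfl⟩
      exact ⟨rEPath n m E hm p, ⟨p, hp, rfl⟩, i, hi, (lab_rE hF hE hm hp hi).symm⟩
    · intro s hs t ht hst
      exact rE_inj_fix hm (labelSet_mem_E hE hs) (labelSet_mem_E hE ht) hst
    · rintro t' ⟨p', ⟨p, hp, rfl⟩, i, hi, rfl⟩
      exact ⟨lab p i, ⟨p, hp, i, hi, rfl⟩, lab_rE hF hE hm hp hi⟩
  · intro p hp i hi
    exact lab_rE hF hE hm hp hi
  · rintro s t ⟨p, hp, i, hi, hse⟩ ⟨q, hq, j, hj, hte⟩ ⟨a, b, c, d, hab, hcd, hsab, hscd, hlex⟩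
    have ha : a ∈ E := (hE a).mpr ⟨p, hp, i, hi, by
      rw [hse, hsab, Equiv.swap_apply_left]; exact (ne_of_lt hab).symm⟩
    have hb : b ∈ E := (hE b).mpr ⟨p, hp, i, hi, by
      rw [hse, hsab, Equiv.swap_apply_right]; exact ne_of_lt hab⟩
    have hc : c ∈ E := (hE c).mpr ⟨q, hq, j, hj, by
      rw [hte, hscd, Equiv.swap_apply_left]; exact (ne_of_lt hcd).symm⟩
    have hd : d ∈ E := (hE d).mpr ⟨q, hq, j, hj, by
      rw [hte, hscd, Equiv.swap_apply_right]; exact ne_of_lt hcd⟩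
    refine ⟨(E.orderIsoOfFin hm).symm ⟨a, ha⟩, (E.orderIsoOfFin hm).symm ⟨b, hb⟩,
      (E.orderIsoOfFin hm).symm ⟨c, hc⟩, (E.orderIsoOfFin hm).symm ⟨d, hd⟩, ?_, ?_, ?_, ?_, ?_⟩
    · exact (E.orderIsoOfFin hm).symm.lt_iff_lt.mpr (Subtype.mk_lt_mk.mpr hab)
    · exact (E.orderIsoOfFin hm).symm.lt_iff_lt.mpr (Subtype.mk_lt_mk.mpr hcd)
    · rw [hsab, rE_swap E hm ha hb]
    · rw [hscd, rE_swap E hm hc hd]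
    · rcases hlex with hlt | ⟨heq, hle⟩
      · exact Or.inl ((E.orderIsoOfFin hm).symm.lt_iff_lt.mpr (Subtype.mk_lt_mk.mpr hlt))
      · exact Or.inr ⟨congrArg (E.orderIsoOfFin hm).symm (Subtype.ext heq),
          (E.orderIsoOfFin hm).symm.le_iff_le.mpr (Subtype.mk_le_mk.mpr hle)⟩

end Main

/-- Lemma (reduction to `E = E(F)`): for a flipclass `F` with `E = E(F)`, `|E| = m`, the
map `r_E` sends `F` to a flipclass `F' = r_E(F)` of `𝔖ₘ`, bijectively, preserving flips
and matching the labels; it induces isomorphisms `S_F ≅ S_{F'}` and `TS_F ≅ TS_{F'}`;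
increasing paths w.r.t. `⪯` correspond to increasing paths w.r.t. `⪯_{r_E}`; and `r_E`
induces an isomorphism of flipclasses from `F` to `F'`. -/
theorem reduction_to_support (n h : ℕ) (u v : Pm n) (F : Set (ℕ → Pm n))
    (hF : IsFlipclass n h u v F) (E : Finset (Fin n))
    (hE : ∀ a : Fin n, a ∈ E ↔ ∃ p ∈ F, ∃ i, i < h ∧ lab p i a ≠ a)
    (m : ℕ) (hm : E.card = m) :
    -- (1)
    IsFlipclass m h (rE n m E hm u) (rE n m E hm v) (rEPath n m E hm '' F) ∧
    Set.InjOn (rEPath n m E hm) F ∧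
    (∀ p ∈ F, ∀ q ∈ F, ∀ i, FlipAt h i p q →
      FlipAt h i (rEPath n m E hm p) (rEPath n m E hm q)) ∧
    (∀ p ∈ F, ∀ i, i < h → rE n m E hm (lab p i) = lab (rEPath n m E hm p) i) ∧
    -- (2)
    Set.BijOn (rE n m E hm) (SV n h F) (SV m h (rEPath n m E hm '' F)) ∧
    (∀ a ∈ SV n h F, ∀ b ∈ SV n h F,
      (SE n h F a b ↔ SE m h (rEPath n m E hm '' F) (rE n m E hm a) (rE n m E hm b))) ∧
    Set.BijOn (fun x : Pm n × ℕ => (rE n m E hm x.1, x.2)) (TSV n h F)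
      (TSV m h (rEPath n m E hm '' F)) ∧
    (∀ x ∈ TSV n h F, ∀ y ∈ TSV n h F,
      (TSE n h F x y ↔
        TSE m h (rEPath n m E hm '' F) (rE n m E hm x.1, x.2) (rE n m E hm y.1, y.2))) ∧
    -- (3)
    (∀ ord : ReflOrder n, ∀ p ∈ F,
      (IncreasingRel h ord.le p ↔
        IncreasingRel h (inducedOrd n m ord E hm) (rEPath n m E hm p))) ∧
    -- (4)
    FlipclassIso n m h F (rEPath n m E hm '' F) := by
  exact ⟨image_is_flipclass hF hE hm, rEPath_injOn hF hE hm,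
    fun p hp q hq i hf => flipAt_rE hF hE hm hp hq hf,
    fun p hp i hi => lab_rE hF hE hm hp hi,
    rE_bijOn_SV hF hE hm,
    fun a ha b hb => rE_SE_iff hF hE hm ha hb,
    rE_bijOn_TSV hF hE hm,
    fun x hx y hy => rE_TSE_iff hF hE hm hx hy,
    fun ord p hp => increasing_iff hF hE hm ord hp,
    flipclassIso_rE hF hE hm⟩
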